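/- arXiv:1608.05401 — 6 statements merged into one kernel-verified Lean document; each statement's English description precedes it below -/
import Mathlib

section
/- Let {α_k} be a non-increasing sequence of non-negative reals converging to 0, and 0 < ν < 1. Then lim_{k→∞} ∑_{i=0}^k α_i ν^{k-i} = 0. -/
open Filter Finset

theorem stmt_2 (α : ℕ → ℝ) (hnn : ∀ k, 0 ≤ α k) (hmono : ∀ k, α (k + 1) ≤ α k)
    (hlim : Filter.Tendsto α Filter.atTop (nhds 0))
    (ν : ℝ) (hν0 : 0 < ν) (hν1 : ν < 1) :
    Filter.Tendsto (fun k => ∑ i ∈ Finset.range (k + 1), α i * ν ^ (k - i))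
      Filter.atTop (nhds 0) := by
  have hanti : Antitone α := antitone_nat_of_succ_le hmono
  have h1ν : (0:ℝ) < 1 - ν := by linarith
  have hsummable : Summable (fun j : ℕ => ν ^ j) :=
    summable_geometric_of_lt_one hν0.le hν1
  have hgs : ∀ n : ℕ, ∑ j ∈ range n, ν ^ j ≤ (1 - ν)⁻¹ := by
    intro n
    calc ∑ j ∈ range n, ν ^ j ≤ ∑' j : ℕ, ν ^ j :=
          Summable.sum_le_tsum (range n) (fun i _ => by positivity) hsummable
      _ = (1 - ν)⁻¹ := tsum_geometric_of_lt_one hν0.le hν1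
  -- reindexing of the tail
  have hre : ∀ m k : ℕ, m ≤ k →
      ∑ i ∈ Ico m (k+1), ν ^ (k - i) = ∑ j ∈ range (k+1-m), ν ^ j := by
    intro m k hmk
    refine Finset.sum_nbij' (fun i => k - i) (fun j => k - j) ?_ ?_ ?_ ?_ ?_
    · intro i hi; simp only [mem_Ico] at hi; simp only [mem_range]; omega
    · intro j hj; simp only [mem_range] at hj; simp only [mem_Ico]; omega
    · intro i hi; simp only [mem_Ico] at hi; show k - (k - i) = i; omega
    · intro j hj; simp only [mem_range] at hj; show k - (k - j) = j; omega
    · intro i hi; rfl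
  -- main bound
  have hbound : ∀ m k : ℕ, m ≤ k →
      ∑ i ∈ range (k + 1), α i * ν ^ (k - i)
        ≤ m * (α 0 * ν ^ (k - m + 1)) + α m * (1 - ν)⁻¹ := by
    intro m k hmk
    have hsplit : range (k+1) = range m ∪ Ico m (k+1) := by
      rw [Finset.range_eq_Ico, Finset.range_eq_Ico, Finset.Ico_union_Ico_eq_Ico (Nat.zero_le m) (by omega)]
    rw [hsplit, Finset.sum_union (by
      rw [Finset.range_eq_Ico]; exact Finset.Ico_disjoint_Ico_consecutive 0 m (k+1))]
    have h1 : ∑ i ∈ range m, α i * ν ^ (k - i) ≤ m * (α 0 * ν ^ (k - m + 1)) := by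
      calc ∑ i ∈ range m, α i * ν ^ (k - i)
          ≤ ∑ i ∈ range m, α 0 * ν ^ (k - m + 1) := by
            refine Finset.sum_le_sum fun i hi => ?_
            simp only [mem_range] at hi
            refine mul_le_mul (hanti (Nat.zero_le i)) ?_ (by positivity) (hnn 0)
            exact pow_le_pow_of_le_one hν0.le hν1.le (by omega)
        _ = m * (α 0 * ν ^ (k - m + 1)) := by
            rw [Finset.sum_const, card_range, nsmul_eq_mul]
    have h2 : ∑ i ∈ Ico m (k+1), α i * ν ^ (k - i) ≤ α m * (1 - ν)⁻¹ := by
      calc ∑ i ∈ Ico m (k+1), α i * ν ^ (k - i)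
          ≤ ∑ i ∈ Ico m (k+1), α m * ν ^ (k - i) := by
            refine Finset.sum_le_sum fun i hi => ?_
            simp only [mem_Ico] at hi
            exact mul_le_mul_of_nonneg_right (hanti hi.1) (by positivity)
        _ = α m * ∑ i ∈ Ico m (k+1), ν ^ (k - i) := by rw [Finset.mul_sum]
        _ ≤ α m * (1 - ν)⁻¹ := by
            rw [hre m k hmk]
            exact mul_le_mul_of_nonneg_left (hgs _) (hnn m)
    linarith
  rw [Metric.tendsto_atTop]
  intro ε hε
  obtain ⟨m, hm⟩ := (Metric.tendsto_atTop.mp hlim) (ε * (1 - ν) / 2) (by positivity)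
  have hαm : α m < ε * (1 - ν) / 2 := by
    have := hm m le_rfl
    rw [Real.dist_eq, sub_zero, abs_of_nonneg (hnn m)] at this
    exact this
  -- first term tends to 0 in k
  have hgeo : Tendsto (fun k : ℕ => (m : ℝ) * (α 0 * ν ^ (k - m + 1))) atTop (nhds 0) := by
    have h1 : Tendsto (fun k : ℕ => ν ^ k) atTop (nhds 0) :=
      tendsto_pow_atTop_nhds_zero_of_lt_one hν0.le hν1
    have h2 : Tendsto (fun k : ℕ => k - m + 1) atTop atTop := by
      apply tendsto_atTop_atTop.mpr
      intro b; exact ⟨b + m, fun a ha => by omega⟩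
    have h3 : Tendsto (fun k : ℕ => ν ^ (k - m + 1)) atTop (nhds 0) := h1.comp h2
    have := h3.const_mul ((m : ℝ) * α 0)
    simpa [mul_assoc] using this
  rw [Metric.tendsto_atTop] at hgeo
  obtain ⟨K, hK⟩ := hgeo (ε / 2) (by positivity)
  refine ⟨max K m, fun k hk => ?_⟩
  have hkK : K ≤ k := le_trans (le_max_left _ _) hk
  have hkm : m ≤ k := le_trans (le_max_right _ _) hk
  have hKk := hK k hkK
  rw [Real.dist_eq, sub_zero] at hKk ⊢
  have hS0 : 0 ≤ ∑ i ∈ range (k + 1), α i * ν ^ (k - i) :=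
    Finset.sum_nonneg fun i _ => mul_nonneg (hnn i) (by positivity)
  rw [abs_of_nonneg hS0]
  have hgk : (m : ℝ) * (α 0 * ν ^ (k - m + 1)) < ε / 2 := by
    have hge : 0 ≤ (m : ℝ) * (α 0 * ν ^ (k - m + 1)) :=
      mul_nonneg (Nat.cast_nonneg m) (mul_nonneg (hnn 0) (by positivity))
    rwa [abs_of_nonneg hge] at hKk
  have htail : α m * (1 - ν)⁻¹ < ε / 2 := by
    calc α m * (1 - ν)⁻¹ < ε * (1 - ν) / 2 * (1 - ν)⁻¹ :=
          mul_lt_mul_of_pos_right hαm (inv_pos.mpr h1ν)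
      _ = ε / 2 := by field_simp
  calc ∑ i ∈ range (k + 1), α i * ν ^ (k - i)
      ≤ m * (α 0 * ν ^ (k - m + 1)) + α m * (1 - ν)⁻¹ := hbound m k hkm
    _ < ε / 2 + ε / 2 := by linarith
    _ = ε := by ring
end

section
/- Let a : ℕ → ℝ be a non-negative sequence with a_{k+1} ≤ ν a_k + α_k L, where 0 < ν < 1, L ≥ 0, and {α_k} is a non-increasing sequence of non-negative reals with α_k → 0. Then a_k → 0. -/
theorem stmt_4 (a α : ℕ → ℝ) (ha : ∀ k, 0 ≤ a k) (hα : ∀ k, 0 ≤ α k)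
    (hαmono : ∀ k, α (k + 1) ≤ α k)
    (hαlim : Filter.Tendsto α Filter.atTop (nhds 0))
    (ν L : ℝ) (hν0 : 0 < ν) (hν1 : ν < 1) (hL : 0 ≤ L)
    (hrec : ∀ k, a (k + 1) ≤ ν * a k + α k * L) :
    Filter.Tendsto a Filter.atTop (nhds 0) := by
  have hanti : Antitone α := antitone_nat_of_succ_le hαmono
  have h1ν : 0 < 1 - ν := by linarith
  rw [Metric.tendsto_atTop]
  intro ε hε
  obtain ⟨N, hN⟩ : ∃ N, α N * L < ε * (1 - ν) / 2 := by
    by_cases hL0 : L = 0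
    · exact ⟨0, by rw [hL0, mul_zero]; positivity⟩
    · have hLpos : 0 < L := lt_of_le_of_ne hL (Ne.symm hL0)
      have h := hαlim.eventually (gt_mem_nhds (show (0:ℝ) < ε * (1 - ν) / 2 / L by positivity))
      obtain ⟨N, hN⟩ := h.exists
      exact ⟨N, by rw [lt_div_iff₀ hLpos] at hN; linarith⟩
  have key : ∀ m, a (N + m) ≤ ν ^ m * a N + ε / 2 := by
    intro m
    induction m with
    | zero => simp; linarith [ha N, hε]
    | succ m ih =>
      have h1 : a (N + m + 1) ≤ ν * a (N + m) + α (N + m) * L := hrec (N + m)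
      have h2 : α (N + m) * L ≤ α N * L :=
        mul_le_mul_of_nonneg_right (hanti (Nat.le_add_right N m)) hL
      have h3 : ν * a (N + m) ≤ ν * (ν ^ m * a N + ε / 2) :=
        mul_le_mul_of_nonneg_left ih (le_of_lt hν0)
      have : a (N + (m + 1)) ≤ ν * (ν ^ m * a N + ε / 2) + α N * L := by
        have : N + (m + 1) = N + m + 1 := by ring
        rw [this]; linarith
      calc a (N + (m + 1)) ≤ ν * (ν ^ m * a N + ε / 2) + α N * L := this
        _ ≤ ν ^ (m + 1) * a N + ε / 2 := by
            rw [pow_succ]; nlinarith [hε, h1ν]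
  obtain ⟨M, hM⟩ : ∃ M, ν ^ M * a N < ε / 2 := by
    have hpow : Filter.Tendsto (fun m => ν ^ m * a N) Filter.atTop (nhds 0) := by
      simpa using (tendsto_pow_atTop_nhds_zero_of_lt_one (le_of_lt hν0) hν1).mul_const (a N)
    exact (hpow.eventually (gt_mem_nhds (by positivity : (0:ℝ) < ε / 2))).exists
  refine ⟨N + M, fun k hk => ?_⟩
  have hkN : N ≤ k := le_trans (Nat.le_add_right N M) hk
  have hk2 : k = N + (k - N) := (Nat.add_sub_cancel' hkN).symm
  have hMle : M ≤ k - N := by omega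
  have hνpow : ν ^ (k - N) ≤ ν ^ M :=
    pow_le_pow_of_le_one (le_of_lt hν0) (le_of_lt hν1) hMle
  have h4 : a k ≤ ν ^ (k - N) * a N + ε / 2 := by nth_rewrite 1 [hk2]; exact key (k - N)
  have h5 : ν ^ (k - N) * a N ≤ ν ^ M * a N :=
    mul_le_mul_of_nonneg_right hνpow (ha N)
  rw [Real.dist_eq, sub_zero, abs_of_nonneg (ha k)]
  linarith
end

section
/- Let (u_k), (v_k), (w_k), (γ_k) be non-negative real sequences with ∑ γ_k < ∞, ∑ w_k < ∞, and u_{k+1} ≤ (1+γ_k)·u_k − v_k + w_k for all k. Then (u_k) converges to a non-negative real limit and ∑ v_k < ∞. -/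
theorem stmt_5 (u v w γ : ℕ → ℝ)
    (hu : ∀ k, 0 ≤ u k) (hv : ∀ k, 0 ≤ v k) (hw : ∀ k, 0 ≤ w k) (hγ : ∀ k, 0 ≤ γ k)
    (hγs : Summable γ) (hws : Summable w)
    (hrec : ∀ k, u (k + 1) ≤ (1 + γ k) * u k - v k + w k) :
    (∃ l : ℝ, 0 ≤ l ∧ Filter.Tendsto u Filter.atTop (nhds l)) ∧ Summable v := by
  classical
  set P : ℕ → ℝ := fun k => ∏ j ∈ Finset.range k, (1 + γ j) with hPdef
  have hP1 : ∀ k, (1 : ℝ) ≤ P k := by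
    intro k
    show (1:ℝ) ≤ ∏ j ∈ Finset.range k, (1 + γ j)
    calc (1:ℝ) = ∏ _j ∈ Finset.range k, (1:ℝ) := by simp
      _ ≤ ∏ j ∈ Finset.range k, (1 + γ j) :=
          Finset.prod_le_prod (by simp) (fun j _ => by linarith [hγ j])
  have hPpos : ∀ k, (0 : ℝ) < P k := fun k => lt_of_lt_of_le one_pos (hP1 k)
  have hPsucc : ∀ k, P (k + 1) = P k * (1 + γ k) := fun k => Finset.prod_range_succ _ k
  have hPmono : Monotone P := monotone_nat_of_le_succ (fun k => by
    rw [hPsucc]; nlinarith [hPpos k, hγ k])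
  have hPbdd : ∀ k, P k ≤ Real.exp (∑' j, γ j) := by
    intro k
    calc P k ≤ ∏ j ∈ Finset.range k, Real.exp (γ j) := by
          refine Finset.prod_le_prod (fun j _ => by linarith [hγ j]) (fun j _ => ?_)
          linarith [Real.add_one_le_exp (γ j)]
      _ = Real.exp (∑ j ∈ Finset.range k, γ j) := (Real.exp_sum _ _).symm
      _ ≤ Real.exp (∑' j, γ j) := Real.exp_le_exp.mpr (Summable.sum_le_tsum _ (fun j _ => hγ j) hγs)
  have hPbddAbove : BddAbove (Set.range P) := ⟨Real.exp (∑' j, γ j), by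
    rintro x ⟨k, rfl⟩; exact hPbdd k⟩
  set L : ℝ := ⨆ k, P k with hLdef
  have hL : Filter.Tendsto P Filter.atTop (nhds L) := tendsto_atTop_ciSup hPmono hPbddAbove
  have hPL : ∀ k, P k ≤ L := fun k => le_ciSup hPbddAbove k
  -- key normalized inequality
  have key : ∀ k, u (k + 1) / P (k + 1) ≤ u k / P k - v k / P (k + 1) + w k / P (k + 1) := by
    intro k
    have p1 : (0 : ℝ) < 1 + γ k := by linarith [hγ k]
    have hPk1 : (0 : ℝ) < P (k + 1) := hPpos (k + 1)
    have huk : u k / P k = ((1 + γ k) * u k) / P (k + 1) := by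
      rw [hPsucc]; field_simp [(hPpos k).ne']
    rw [huk, show ((1 + γ k) * u k) / P (k + 1) - v k / P (k + 1) + w k / P (k + 1)
        = ((1 + γ k) * u k - v k + w k) / P (k + 1) by ring]
    exact div_le_div_of_nonneg_right (hrec k) hPk1.le
  -- summable of w k / P (k+1)
  set W : ℕ → ℝ := fun k => w k / P (k + 1) with hWdef
  have hWnonneg : ∀ k, 0 ≤ W k := fun k => div_nonneg (hw k) (hPpos (k + 1)).le
  have hWle : ∀ k, W k ≤ w k := fun k => div_le_self (hw k) (hP1 (k + 1))
  have hWs : Summable W := Summable.of_nonneg_of_le hWnonneg hWle hws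
  set T : ℝ := ∑' k, W k with hTdef
  have hT : Filter.Tendsto (fun n => ∑ j ∈ Finset.range n, W j) Filter.atTop (nhds T) :=
    hWs.hasSum.tendsto_sum_nat
  -- z is antitone and bounded below
  set z : ℕ → ℝ := fun k => u k / P k - ∑ j ∈ Finset.range k, W j with hzdef
  have hzstep : ∀ k, z (k + 1) + v k / P (k + 1) ≤ z k := by
    intro k
    have hk := key k
    simp only [hzdef, Finset.sum_range_succ]
    have : W k = w k / P (k + 1) := rfl
    linarith [hk]
  have hvP : ∀ k, 0 ≤ v k / P (k + 1) := fun k => div_nonneg (hv k) (hPpos (k + 1)).le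
  have hzanti : Antitone z := antitone_nat_of_succ_le (fun k => (le_add_of_nonneg_right (hvP k)).trans (hzstep k))
  have hzlb : ∀ k, -(∑' j, w j) ≤ z k := by
    intro k
    have h1 : 0 ≤ u k / P k := div_nonneg (hu k) (hPpos k).le
    have h2 : ∑ j ∈ Finset.range k, W j ≤ ∑' j, w j := by
      calc ∑ j ∈ Finset.range k, W j ≤ ∑ j ∈ Finset.range k, w j :=
            Finset.sum_le_sum (fun j _ => hWle j)
        _ ≤ ∑' j, w j := Summable.sum_le_tsum _ (fun j _ => hw j) hws
    simp only [hzdef]; linarith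
  have hzbdd : BddBelow (Set.range z) := ⟨-(∑' j, w j), by rintro x ⟨k, rfl⟩; exact hzlb k⟩
  set m : ℝ := ⨅ k, z k with hmdef
  have hz : Filter.Tendsto z Filter.atTop (nhds m) := tendsto_atTop_ciInf hzanti hzbdd
  -- convergence of u
  have huP : Filter.Tendsto (fun k => u k / P k) Filter.atTop (nhds (m + T)) := by
    have : (fun k => u k / P k) = fun k => z k + ∑ j ∈ Finset.range k, W j := by
      funext k; simp [hzdef]
    rw [this]; exact hz.add hT
  have hul : Filter.Tendsto u Filter.atTop (nhds ((m + T) * L)) := by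
    have : (fun k => u k / P k * P k) = u := by
      funext k; exact div_mul_cancel₀ (u k) (hPpos k).ne'
    rw [← this]; exact huP.mul hL
  have hl0 : 0 ≤ (m + T) * L := ge_of_tendsto' hul hu
  refine ⟨⟨(m + T) * L, hl0, hul⟩, ?_⟩
  -- summability of v
  have hsum_le : ∀ n, ∑ j ∈ Finset.range n, v j / P (j + 1) ≤ z 0 - z n := by
    intro n
    induction n with
    | zero => simp
    | succ n ih =>
        rw [Finset.sum_range_succ]
        have := hzstep n
        linarith
  have hvPs : Summable (fun k => v k / P (k + 1)) := by
    apply summable_of_sum_range_le hvP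
    intro n
    calc ∑ j ∈ Finset.range n, v j / P (j + 1) ≤ z 0 - z n := hsum_le n
      _ ≤ z 0 + ∑' j, w j := by linarith [hzlb n]
  refine Summable.of_nonneg_of_le hv (fun k => ?_) (hvPs.mul_right L)
  have h1 : v k = v k / P (k + 1) * P (k + 1) := (div_mul_cancel₀ (v k) (hPpos (k + 1)).ne').symm
  calc v k = v k / P (k + 1) * P (k + 1) := h1
    _ ≤ v k / P (k + 1) * L := by
        exact mul_le_mul_of_nonneg_left (hPL (k + 1)) (hvP k)
end

section
/- Let (u_k), (w_k), (γ_k) be non-negative real sequences and (α_k) a non-negative sequence with ∑ α_k = ∞, ∑ γ_k < ∞, ∑ w_k < ∞, and suppose u_{k+1} ≤ (1+γ_k) u_k − α_k b_k + w_k where b_k ≥ 0. Then liminf_{k→∞} b_k = 0. -/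
open Filter Finset

theorem stmt_6 (u w γ α b : ℕ → ℝ)
    (hu : ∀ k, 0 ≤ u k) (hw : ∀ k, 0 ≤ w k) (hγ : ∀ k, 0 ≤ γ k)
    (hα : ∀ k, 0 ≤ α k) (hb : ∀ k, 0 ≤ b k)
    (hγs : Summable γ) (hws : Summable w)
    (hαdiv : ¬ Summable α)
    (hrec : ∀ k, u (k + 1) ≤ (1 + γ k) * u k - α k * b k + w k) :
    Filter.liminf b Filter.atTop = 0 := by
  set Q : ℕ → ℝ := fun n => ∏ k ∈ Finset.range n, (1 + γ k) with hQdef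
  have hQpos : ∀ n, 0 < Q n := fun n =>
    Finset.prod_pos (fun k _ => by linarith [hγ k])
  set E : ℝ := Real.exp (∑' k, γ k) with hEdef
  have hEpos : 0 < E := Real.exp_pos _
  have hQE : ∀ n, Q n ≤ E := by
    intro n
    calc Q n ≤ ∏ k ∈ Finset.range n, Real.exp (γ k) :=
          Finset.prod_le_prod (fun k _ => by linarith [hγ k])
            (fun k _ => by linarith [Real.add_one_le_exp (γ k)])
      _ = Real.exp (∑ k ∈ Finset.range n, γ k) := (Real.exp_sum _ _).symm
      _ ≤ E := Real.exp_le_exp.2 (Summable.sum_le_tsum _ (fun k _ => hγ k) hγs)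
  have hQ1 : ∀ n, (1:ℝ) ≤ Q n := by
    intro n
    show (1:ℝ) ≤ ∏ k ∈ Finset.range n, (1 + γ k)
    calc (1:ℝ) = ∏ _k ∈ Finset.range n, (1:ℝ) := by simp
      _ ≤ ∏ k ∈ Finset.range n, (1 + γ k) :=
        Finset.prod_le_prod (fun j _ => by norm_num) (fun j _ => by linarith [hγ j])
  set W : ℝ := ∑' k, w k with hWdef
  have hW0 : 0 ≤ W := tsum_nonneg hw
  set C : ℝ := E * (u 0 + W) with hCdef
  have hC0 : 0 ≤ C := mul_nonneg hEpos.le (add_nonneg (hu 0) hW0)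
  -- step inequality
  have hstep : ∀ k, α k * b k / E ≤ u k / Q k - u (k + 1) / Q (k + 1) + w k := by
    intro k
    have hQsucc : Q (k + 1) = Q k * (1 + γ k) := Finset.prod_range_succ _ _
    have h1 : u (k + 1) + α k * b k ≤ (1 + γ k) * u k + w k := by linarith [hrec k]
    have hQk := hQpos k
    have hQk1 := hQpos (k + 1)
    have hab : 0 ≤ α k * b k := mul_nonneg (hα k) (hb k)
    have h2 : α k * b k / E ≤ α k * b k / Q (k + 1) :=
      div_le_div_of_nonneg_left hab hQk1 (hQE _)
    have h3 : (u (k + 1) + α k * b k) / Q (k + 1) ≤ ((1 + γ k) * u k + w k) / Q (k + 1) :=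
      (div_le_div_iff_of_pos_right hQk1).2 h1
    have hγk1 : (0:ℝ) < 1 + γ k := by linarith [hγ k]
    have h4 : ((1 + γ k) * u k + w k) / Q (k + 1) = u k / Q k + w k / Q (k + 1) := by
      rw [add_div, hQsucc, mul_comm (1 + γ k) (u k), mul_div_mul_right _ _ hγk1.ne']
    have h5 : w k / Q (k + 1) ≤ w k := by
      rw [div_le_iff₀ hQk1]
      nlinarith [hw k, hQ1 (k + 1)]
    have h6 : u (k + 1) / Q (k + 1) + α k * b k / Q (k + 1) = (u (k + 1) + α k * b k) / Q (k + 1) := by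
      rw [add_div]
    linarith
  -- partial sums of α * b are bounded by C
  have hsumab : ∀ n, ∑ k ∈ Finset.range n, α k * b k ≤ C := by
    intro n
    have htel : ∑ k ∈ Finset.range n, (u k / Q k - u (k + 1) / Q (k + 1)) =
        u 0 / Q 0 - u n / Q n := Finset.sum_range_sub' (fun k => u k / Q k) n
    have h1 : ∑ k ∈ Finset.range n, α k * b k / E ≤
        (u 0 / Q 0 - u n / Q n) + ∑ k ∈ Finset.range n, w k := by
      calc ∑ k ∈ Finset.range n, α k * b k / E
          ≤ ∑ k ∈ Finset.range n, (u k / Q k - u (k + 1) / Q (k + 1) + w k) :=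
            Finset.sum_le_sum (fun k _ => hstep k)
        _ = (u 0 / Q 0 - u n / Q n) + ∑ k ∈ Finset.range n, w k := by
            rw [Finset.sum_add_distrib, htel]
    have hQ0 : Q 0 = 1 := Finset.prod_range_zero _
    have hun : 0 ≤ u n / Q n := div_nonneg (hu n) (hQpos n).le
    have hwn : ∑ k ∈ Finset.range n, w k ≤ W := Summable.sum_le_tsum _ (fun k _ => hw k) hws
    have h2 : (∑ k ∈ Finset.range n, α k * b k) / E ≤ u 0 + W := by
      rw [← Finset.sum_div, hQ0, div_one] at h1
      linarith
    rw [div_le_iff₀ hEpos] at h2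
    calc ∑ k ∈ Finset.range n, α k * b k ≤ (u 0 + W) * E := h2
      _ = C := by rw [hCdef]; ring
  -- frequently b < ε for every ε > 0
  have key : ∀ ε : ℝ, 0 < ε → ∃ᶠ n in atTop, b n < ε := by
    intro ε hε
    by_contra hcon
    rw [not_frequently] at hcon
    simp only [not_lt] at hcon
    obtain ⟨N, hN⟩ := eventually_atTop.1 hcon
    apply hαdiv
    apply summable_of_sum_range_le (c := ∑ k ∈ Finset.range N, α k + C / ε) hα
    intro n
    rcases le_or_gt n N with h | h
    · have : ∑ k ∈ Finset.range n, α k ≤ ∑ k ∈ Finset.range N, α k :=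
        Finset.sum_le_sum_of_subset_of_nonneg (Finset.range_subset_range.2 h)
          (fun k _ _ => hα k)
      have : 0 ≤ C / ε := div_nonneg hC0 hε.le
      linarith
    · have hsplit : ∑ k ∈ Finset.range n, α k =
          ∑ k ∈ Finset.range N, α k + ∑ k ∈ Finset.Ico N n, α k := by
        rw [Finset.range_eq_Ico, Finset.range_eq_Ico]
        exact (Finset.sum_Ico_consecutive α (Nat.zero_le N) h.le).symm
      have hIco : ε * ∑ k ∈ Finset.Ico N n, α k ≤ C := by
        calc ε * ∑ k ∈ Finset.Ico N n, α k
            = ∑ k ∈ Finset.Ico N n, ε * α k := Finset.mul_sum _ _ _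
          _ ≤ ∑ k ∈ Finset.Ico N n, α k * b k := by
              apply Finset.sum_le_sum
              intro k hk
              have hk' : N ≤ k := (Finset.mem_Ico.1 hk).1
              have := hN k hk'
              nlinarith [hα k]
          _ ≤ ∑ k ∈ Finset.range n, α k * b k := by
              apply Finset.sum_le_sum_of_subset_of_nonneg
              · rw [Finset.range_eq_Ico]
                exact Finset.Ico_subset_Ico (Nat.zero_le _) le_rfl
              · intro k _ _; exact mul_nonneg (hα k) (hb k)
          _ ≤ C := hsumab n
      have : ∑ k ∈ Finset.Ico N n, α k ≤ C / ε := by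
        rw [le_div_iff₀ hε]
        linarith [hIco]
      linarith [hsplit]
  -- conclude
  have hbdd : IsBoundedUnder (· ≥ ·) atTop b := isBoundedUnder_of ⟨0, hb⟩
  have hcb : IsCoboundedUnder (· ≥ ·) atTop b :=
    IsCoboundedUnder.of_frequently_le ((key 1 one_pos).mono fun n h => h.le)
  refine le_antisymm ?_ ?_
  · by_contra hlt
    push_neg at hlt
    obtain ⟨ε, hε0, hεlt⟩ := exists_between hlt
    exact absurd (liminf_le_of_frequently_le ((key ε hε0).mono fun n h => h.le) hbdd)
      (not_le.2 hεlt)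
  · exact le_liminf_of_le hcb (Eventually.of_forall hb)
end

section
/- Let f = ∑_{i=1}^S f_i where each f_i : ℝ^D → ℝ is differentiable with gradient g_i satisfying ‖g_i(x)‖ ≤ L_i, and f is convex. Let v̄, y ∈ ℝ^D and δ_J ∈ ℝ^D with v_J = v̄ + δ_J. Then ∑_J ⟨g_J(v̄), y − v_J⟩ ≤ f(y) − f(v̄) + (∑_J L_J) · max_J ‖δ_J‖. -/
theorem stmt_15 (S D : ℕ) (f : Fin S → EuclideanSpace ℝ (Fin D) → ℝ)
    (g : Fin S → EuclideanSpace ℝ (Fin D) → EuclideanSpace ℝ (Fin D))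
    (hg : ∀ i x, HasGradientAt (f i) (g i x) x)
    (L : Fin S → ℝ) (hL : ∀ i x, ‖g i x‖ ≤ L i)
    (hconv : ConvexOn ℝ Set.univ (fun x => ∑ i, f i x))
    (vbar y : EuclideanSpace ℝ (Fin D)) (δ : Fin S → EuclideanSpace ℝ (Fin D))
    (M : ℝ) (hM : ∀ J, ‖δ J‖ ≤ M) :
    ∑ J, (inner ℝ (g J vbar) (y - (vbar + δ J)) : ℝ)
      ≤ (∑ i, f i y) - (∑ i, f i vbar) + (∑ J, L J) * M := by
  classical
  set u : EuclideanSpace ℝ (Fin D) := y - vbar with hu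
  set G : EuclideanSpace ℝ (Fin D) := ∑ i, g i vbar with hG
  -- the sum has gradient G at vbar (as an fderiv)
  have hF : HasFDerivAt (fun x => ∑ i, f i x)
      (∑ i, (InnerProductSpace.toDual ℝ (EuclideanSpace ℝ (Fin D))) (g i vbar)) vbar :=
    HasFDerivAt.fun_sum (fun i _ => hg i vbar)
  -- the curve
  have hc : HasDerivAt (fun t : ℝ => vbar + t • u) u 0 := by
    have : HasDerivAt (fun t : ℝ => t • u) ((1 : ℝ) • u) 0 :=
      (hasDerivAt_id (0 : ℝ)).smul_const u
    simpa using this.const_add vbar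
  have hc0 : vbar + (0 : ℝ) • u = vbar := by simp
  have hd : HasDerivAt (fun t : ℝ => ∑ i, f i (vbar + t • u)) (inner ℝ G u : ℝ) 0 := by
    have hF' : HasFDerivAt (fun x => ∑ i, f i x)
        (∑ i, (InnerProductSpace.toDual ℝ (EuclideanSpace ℝ (Fin D))) (g i vbar))
        ((fun t : ℝ => vbar + t • u) 0) := by simpa using hF
    have := hF'.comp_hasDerivAt (0 : ℝ) hc
    have heq : (∑ i, (InnerProductSpace.toDual ℝ (EuclideanSpace ℝ (Fin D))) (g i vbar)) u
        = (inner ℝ G u : ℝ) := by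
      simp [hG, sum_inner, InnerProductSpace.toDual_apply_apply]
    rw [heq] at this
    exact this
  -- convexity along the line
  have hconvline : ConvexOn ℝ Set.univ (fun t : ℝ => ∑ i, f i (vbar + t • u)) := by
    have h2 := hconv.comp_affineMap (AffineMap.lineMap vbar y : ℝ →ᵃ[ℝ] EuclideanSpace ℝ (Fin D))
    simp only [Set.preimage_univ] at h2
    convert h2 using 1
    iterate 4 rfl
    funext t
    show (∑ i, f i (vbar + t • u)) = _
    have harg : (AffineMap.lineMap vbar y : ℝ →ᵃ[ℝ] EuclideanSpace ℝ (Fin D)) t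
        = vbar + t • u := by
      rw [AffineMap.lineMap_apply, hu]
      simp only [vsub_eq_sub, vadd_eq_add]
      module
    simp [Function.comp, harg]
  have key : (inner ℝ G u : ℝ) ≤ (∑ i, f i y) - (∑ i, f i vbar) := by
    have hs := hconvline.le_slope_of_hasDerivAt (Set.mem_univ (0 : ℝ))
      (Set.mem_univ (1 : ℝ)) zero_lt_one hd
    have h1 : vbar + (1 : ℝ) • u = y := by simp [hu]
    have h1' : vbar + u = y := by rw [hu]; abel
    rw [slope_def_field] at hs
    simpa [h1, h1', hc0] using hs
  -- bound each perturbation term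
  have hterm : ∀ J, -(inner ℝ (g J vbar) (δ J) : ℝ) ≤ L J * M := by
    intro J
    have h1 : -(inner ℝ (g J vbar) (δ J) : ℝ) ≤ ‖g J vbar‖ * ‖δ J‖ := by
      have := abs_real_inner_le_norm (g J vbar) (δ J)
      have := neg_abs_le (inner ℝ (g J vbar) (δ J) : ℝ)
      nlinarith [abs_real_inner_le_norm (g J vbar) (δ J),
        neg_abs_le (inner ℝ (g J vbar) (δ J) : ℝ)]
    exact h1.trans (mul_le_mul (hL J vbar) (hM J) (norm_nonneg _)
      ((norm_nonneg _).trans (hL J vbar)))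
  calc ∑ J, (inner ℝ (g J vbar) (y - (vbar + δ J)) : ℝ)
      = ∑ J, ((inner ℝ (g J vbar) u : ℝ) + -(inner ℝ (g J vbar) (δ J) : ℝ)) := by
        refine Finset.sum_congr rfl fun J _ => ?_
        have : y - (vbar + δ J) = u - δ J := by rw [hu]; abel
        rw [this, inner_sub_right]; ring
    _ = (inner ℝ G u : ℝ) + ∑ J, -(inner ℝ (g J vbar) (δ J) : ℝ) := by
        rw [Finset.sum_add_distrib, hG, sum_inner]
    _ ≤ ((∑ i, f i y) - (∑ i, f i vbar)) + (∑ J, L J) * M := by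
        refine add_le_add key ?_
        rw [Finset.sum_mul]
        exact Finset.sum_le_sum fun J _ => hterm J
end

section
/- Let B be an S×S doubly stochastic scrambling matrix with all non-zero entries ≥ η > 0, meaning any two rows have a common column with positive entries. Then for any x : Fin S → ℝ^D, setting v_J = ∑_L B[J,L] x_L, one has max_{I,J} ‖v_J − v_I‖ ≤ ν · max_{P,Q} ‖x_P − x_Q‖ where ν = 1 − η < 1. -/
theorem stmt_19 (S D : ℕ) (B : Matrix (Fin S) (Fin S) ℝ)
    (hnn : ∀ I J, 0 ≤ B I J)
    (hrow : ∀ I, ∑ J, B I J = 1) (hcol : ∀ J, ∑ I, B I J = 1)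
    (η : ℝ) (hη : 0 < η)
    (hlb : ∀ I J, B I J ≠ 0 → η ≤ B I J)
    (hscr : ∀ I J, ∃ L, 0 < B I L ∧ 0 < B J L)
    (x : Fin S → EuclideanSpace ℝ (Fin D))
    (v : Fin S → EuclideanSpace ℝ (Fin D)) (hv : ∀ J, v J = ∑ L, B J L • x L)
    (M : ℝ) (hM : ∀ P Q, ‖x P - x Q‖ ≤ M) :
    ∀ I J, ‖v J - v I‖ ≤ (1 - η) * M := by
  intro I J
  obtain ⟨L0, hI0, hJ0⟩ := hscr I J
  set c : Fin S → ℝ := fun L => min (B I L) (B J L) with hc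
  have hcnn : ∀ L, 0 ≤ c L := fun L => le_min (hnn I L) (hnn J L)
  have haL : ∀ L, 0 ≤ B J L - c L := fun L => sub_nonneg.2 (min_le_right _ _)
  have hbL : ∀ L, 0 ≤ B I L - c L := fun L => sub_nonneg.2 (min_le_left _ _)
  set t : ℝ := 1 - ∑ L, c L with ht
  have hsa : ∑ L, (B J L - c L) = t := by
    rw [Finset.sum_sub_distrib, hrow, ht]
  have hsb : ∑ L, (B I L - c L) = t := by
    rw [Finset.sum_sub_distrib, hrow, ht]
  have htnn : 0 ≤ t := hsa ▸ Finset.sum_nonneg fun L _ => haL L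
  have hcL0 : η ≤ c L0 := le_min (hlb I L0 hI0.ne') (hlb J L0 hJ0.ne')
  have htle : t ≤ 1 - η := by
    have h1 : η ≤ ∑ L, c L :=
      le_trans hcL0 (Finset.single_le_sum (fun L _ => hcnn L) (Finset.mem_univ L0))
    rw [ht]; linarith
  have hM0 : 0 ≤ M := le_trans (norm_nonneg _) (hM I I)
  have hdiff : v J - v I = (∑ L, (B J L - c L) • x L) - ∑ L, (B I L - c L) • x L := by
    rw [hv, hv]
    simp only [sub_smul, Finset.sum_sub_distrib]
    abel
  have key : t • (v J - v I) =
      ∑ L, ∑ P, ((B J L - c L) * (B I P - c P)) • (x L - x P) := by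
    have h1 : ∑ L, ∑ P, ((B J L - c L) * (B I P - c P)) • x L
        = t • ∑ L, (B J L - c L) • x L := by
      rw [Finset.smul_sum]
      refine Finset.sum_congr rfl fun L _ => ?_
      rw [← Finset.sum_smul, ← Finset.mul_sum, hsb, mul_comm, mul_smul]
    have h2 : ∑ L, ∑ P, ((B J L - c L) * (B I P - c P)) • x P
        = t • ∑ P, (B I P - c P) • x P := by
      rw [Finset.sum_comm, Finset.smul_sum]
      refine Finset.sum_congr rfl fun P _ => ?_
      rw [← Finset.sum_smul, ← Finset.sum_mul, hsa, mul_smul]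
    rw [hdiff]
    simp only [smul_sub, Finset.sum_sub_distrib, h1, h2]
  have hbound : t * ‖v J - v I‖ ≤ t * t * M := by
    calc t * ‖v J - v I‖ = ‖t • (v J - v I)‖ := by
          rw [norm_smul, Real.norm_of_nonneg htnn]
      _ = ‖∑ L, ∑ P, ((B J L - c L) * (B I P - c P)) • (x L - x P)‖ := by rw [key]
      _ ≤ ∑ L, ∑ P, ((B J L - c L) * (B I P - c P)) * ‖x L - x P‖ := by
          refine le_trans (norm_sum_le _ _) (Finset.sum_le_sum fun L _ => ?_)
          refine le_trans (norm_sum_le _ _) (Finset.sum_le_sum fun P _ => ?_)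
          rw [norm_smul, Real.norm_of_nonneg (mul_nonneg (haL L) (hbL P))]
      _ ≤ ∑ L, ∑ P, ((B J L - c L) * (B I P - c P)) * M := by
          refine Finset.sum_le_sum fun L _ => Finset.sum_le_sum fun P _ => ?_
          exact mul_le_mul_of_nonneg_left (hM L P) (mul_nonneg (haL L) (hbL P))
      _ = t * t * M := by
          simp only [mul_assoc, ← Finset.mul_sum]
          rw [← Finset.sum_mul, hsa]
          congr 1
          rw [← Finset.sum_mul, hsb]
  rcases eq_or_lt_of_le htnn with h0 | hpos
  · have ha0 : ∀ L ∈ Finset.univ, (B J L - c L) = 0 :=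
      (Finset.sum_eq_zero_iff_of_nonneg (fun L _ => haL L)).1 (hsa.trans h0.symm)
    have hb0 : ∀ L ∈ Finset.univ, (B I L - c L) = 0 :=
      (Finset.sum_eq_zero_iff_of_nonneg (fun L _ => hbL L)).1 (hsb.trans h0.symm)
    have hz : v J - v I = 0 := by
      rw [hdiff, Finset.sum_eq_zero (fun L _ => by rw [ha0 L (Finset.mem_univ L), zero_smul]),
        Finset.sum_eq_zero (fun L _ => by rw [hb0 L (Finset.mem_univ L), zero_smul]), sub_zero]
    rw [hz, norm_zero]
    have : (0:ℝ) ≤ 1 - η := h0 ▸ htle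
    exact mul_nonneg this hM0
  · have h1 : ‖v J - v I‖ ≤ t * M := by
      have := (mul_le_mul_iff_right₀ hpos).1 (by linarith [hbound] : t * ‖v J - v I‖ ≤ t * (t * M))
      exact this
    calc ‖v J - v I‖ ≤ t * M := h1
      _ ≤ (1 - η) * M := mul_le_mul_of_nonneg_right htle hM0
end
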